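/- Any fan triangulation of a convex polygon can be reached by flips: for a convex polygon with N ≥ 4 vertices, every triangulation can be transformed by finitely many diagonal flips into the fan triangulation at a fixed vertex v₀ (the triangulation whose diagonals all emanate from v₀), and the number of diagonals of any triangulation is N − 3. -/
import Mathlib


/-- `p = (i, j)` is a diagonal of the convex polygon with vertices `0, 1, …, N-1`. -/
def IsDiag (N : ℕ) (p : ℕ × ℕ) : Prop :=
  p.1 < p.2 ∧ p.2 < N ∧ p.2 ≠ p.1 + 1 ∧ ¬(p.1 = 0 ∧ p.2 = N - 1)

/-- Two diagonals of a convex polygon cross in their interiors. -/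
def DiagCross (p q : ℕ × ℕ) : Prop :=
  (p.1 < q.1 ∧ q.1 < p.2 ∧ p.2 < q.2) ∨ (q.1 < p.1 ∧ p.1 < q.2 ∧ q.2 < p.2)

/-- A triangulation of a convex `N`-gon: a maximal set of pairwise noncrossing
diagonals. -/
def IsPolygonTriangulation (N : ℕ) (D : Finset (ℕ × ℕ)) : Prop :=
  (∀ p ∈ D, IsDiag N p) ∧
  (∀ p ∈ D, ∀ q ∈ D, ¬ DiagCross p q) ∧
  (∀ p, IsDiag N p → p ∉ D → ∃ q ∈ D, DiagCross p q)

/-- Two triangulations are related by a flip when they differ in exactly one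
diagonal. -/
def FlipAdj (N : ℕ) (D D' : Finset (ℕ × ℕ)) : Prop :=
  IsPolygonTriangulation N D ∧ IsPolygonTriangulation N D' ∧
  (D \ D').card = 1 ∧ (D' \ D).card = 1

/-- The fan triangulation at the vertex `0`: all diagonals from `0`. -/
def FanTriangulation (N : ℕ) : Finset (ℕ × ℕ) :=
  (Finset.Ico 2 (N - 1)).image fun j => (0, j)

attribute [local instance] Classical.propDecidable

/-- `(a,b)` is an edge or a diagonal present in the triangulation. -/
def Present (N : ℕ) (D : Finset (ℕ × ℕ)) (a b : ℕ) : Prop :=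
  b = a + 1 ∨ (a = 0 ∧ b = N - 1) ∨ (a, b) ∈ D

lemma diagCross_symm {p q : ℕ × ℕ} (h : DiagCross p q) : DiagCross q p := by
  unfold DiagCross at *; omega

/-- Inside any present chord there is an apex forming a triangle. -/
lemma inner_apex (N : ℕ) (D : Finset (ℕ × ℕ)) (hD : IsPolygonTriangulation N D)
    {a b : ℕ} (hab : Present N D a b) (h1 : a + 1 < b) (h2 : b < N) :
    ∃ x, a < x ∧ x < b ∧ Present N D a x ∧ Present N D x b := by
  classical
  obtain ⟨hdiag, hcross, hmax⟩ := hD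
  obtain ⟨x, hxmem, hxmax⟩ :
      ∃ x ∈ (Finset.Ico (a+1) b).filter (fun c => Present N D a c),
        ∀ y ∈ (Finset.Ico (a+1) b).filter (fun c => Present N D a c), y ≤ x := by
    have hne : ((Finset.Ico (a+1) b).filter (fun c => Present N D a c)).Nonempty := by
      refine ⟨a+1, ?_⟩
      simp only [Finset.mem_filter, Finset.mem_Ico]
      exact ⟨⟨le_rfl, h1⟩, Or.inl rfl⟩
    exact ⟨_, Finset.max'_mem _ hne, fun y hy => Finset.le_max' _ y hy⟩
  simp only [Finset.mem_filter, Finset.mem_Ico] at hxmem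
  obtain ⟨⟨hx1, hx2⟩, hax⟩ := hxmem
  refine ⟨x, by omega, hx2, hax, ?_⟩
  by_cases hxb : b = x + 1
  · exact Or.inl hxb
  by_cases hmem : (x, b) ∈ D
  · exact Or.inr (Or.inr hmem)
  have hdxb : IsDiag N (x, b) := ⟨hx2, h2, hxb, by omega⟩
  obtain ⟨⟨c, d⟩, hqD, hq⟩ := hmax (x, b) hdxb hmem
  obtain ⟨hcd, hdN, -, -⟩ := hdiag _ hqD
  simp only [DiagCross] at hq
  rcases hq with ⟨h3, h4, h5⟩ | ⟨h3, h4, h5⟩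
  · -- x < c, c < b, b < d
    rcases hab with h | ⟨h0, hbn⟩ | hab'
    · omega
    · omega
    · exact absurd (Or.inl ⟨by omega, h4, h5⟩) (hcross _ hab' _ hqD)
  · -- c < x, x < d, d < b
    rcases Nat.lt_trichotomy c a with hca | hca | hca
    · rcases hab with h | ⟨h0, hbn⟩ | hab'
      · omega
      · omega
      · exact absurd (Or.inr ⟨hca, by omega, h5⟩) (hcross _ hab' _ hqD)
    · subst hca
      have hle := hxmax d (by
        simp only [Finset.mem_filter, Finset.mem_Ico]
        exact ⟨⟨by omega, h5⟩, Or.inr (Or.inr hqD)⟩)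
      omega
    · rcases hax with h | ⟨h0, hxn⟩ | hax'
      · omega
      · omega
      · exact absurd (Or.inl ⟨hca, h3, h4⟩) (hcross _ hax' _ hqD)

/-- Key flip step: if some diagonal does not emanate from `0`, one flip can
strictly decrease the number of such diagonals. -/
lemma flip_step (N : ℕ) (hN : 4 ≤ N) (D : Finset (ℕ × ℕ))
    (hD : IsPolygonTriangulation N D) (hne : ∃ p ∈ D, p.1 ≠ 0) :
    ∃ D', FlipAdj N D D' ∧
      (D'.filter fun p => p.1 ≠ 0).card < (D.filter fun p => p.1 ≠ 0).card := by
  classical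
  obtain ⟨hdiag, hcross, hmax⟩ := hD
  have hD : IsPolygonTriangulation N D := ⟨hdiag, hcross, hmax⟩
  obtain ⟨⟨pa, pb⟩, hpD, hp1⟩ := hne
  obtain ⟨hp2, hp3, hp4, -⟩ := hdiag _ hpD
  simp only [ne_eq] at hp1
  simp only at hp2 hp3 hp4
  -- the smallest j with (0,j) a missing diagonal
  obtain ⟨j, hjmem, hjmin'⟩ :
      ∃ j ∈ (Finset.Ico 2 (N-1)).filter (fun j => (0, j) ∉ D),
        ∀ i ∈ (Finset.Ico 2 (N-1)).filter (fun j => (0, j) ∉ D), j ≤ i := by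
    have hJne : ((Finset.Ico 2 (N-1)).filter (fun j => (0, j) ∉ D)).Nonempty := by
      refine ⟨pa + 1, ?_⟩
      simp only [Finset.mem_filter, Finset.mem_Ico]
      refine ⟨⟨by omega, by omega⟩, fun hmem => ?_⟩
      exact hcross _ hmem _ hpD (Or.inl ⟨by omega, by omega, by omega⟩)
    exact ⟨_, Finset.min'_mem _ hJne, fun i hi => Finset.min'_le _ i hi⟩
  simp only [Finset.mem_filter, Finset.mem_Ico] at hjmem
  obtain ⟨⟨hj2, hjN⟩, hjD⟩ := hjmem
  have hjmin : ∀ i, 2 ≤ i → i < j → (0, i) ∈ D := by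
    intro i h2i hij
    by_contra hmem
    have := hjmin' i (by
      simp only [Finset.mem_filter, Finset.mem_Ico]; exact ⟨⟨h2i, by omega⟩, hmem⟩)
    omega
  -- the smallest k > j with (0,k) present
  obtain ⟨k, hkmem, hkmin'⟩ :
      ∃ k ∈ (Finset.Ioc j (N-1)).filter (fun k => Present N D 0 k),
        ∀ i ∈ (Finset.Ioc j (N-1)).filter (fun k => Present N D 0 k), k ≤ i := by
    have hKne : ((Finset.Ioc j (N-1)).filter (fun k => Present N D 0 k)).Nonempty := by
      refine ⟨N-1, ?_⟩
      simp only [Finset.mem_filter, Finset.mem_Ioc]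
      exact ⟨⟨by omega, le_rfl⟩, Or.inr (Or.inl ⟨rfl, rfl⟩)⟩
    exact ⟨_, Finset.min'_mem _ hKne, fun i hi => Finset.min'_le _ i hi⟩
  simp only [Finset.mem_filter, Finset.mem_Ioc] at hkmem
  obtain ⟨⟨hjk, hkN⟩, hkP⟩ := hkmem
  have hnd : ∀ d, j - 1 < d → d < k → (0, d) ∉ D := by
    intro d h1 h2 hmem
    rcases Nat.eq_or_lt_of_le (by omega : j ≤ d) with h | h
    · exact hjD (by rwa [← h] at hmem)
    · have := hkmin' d (by
        simp only [Finset.mem_filter, Finset.mem_Ioc]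
        exact ⟨⟨h, by omega⟩, Or.inr (Or.inr hmem)⟩)
      omega
  -- the diagonal to flip
  have heD : (j - 1, k) ∈ D := by
    by_contra hmem
    have hed : IsDiag N (j-1, k) := ⟨by omega, by omega, by omega, by omega⟩
    obtain ⟨⟨c, d⟩, hqD, hq⟩ := hmax _ hed hmem
    obtain ⟨hcd, hdN, -, -⟩ := hdiag _ hqD
    simp only at hcd hdN
    simp only [DiagCross] at hq
    rcases hq with ⟨h3, h4, h5⟩ | ⟨h3, h4, h5⟩
    · -- j-1 < c, c < k, k < d
      rcases hkP with h | ⟨-, h⟩ | hkD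
      · omega
      · omega
      · exact hcross _ hkD _ hqD (Or.inl ⟨by omega, h4, h5⟩)
    · -- c < j-1, j-1 < d, d < k
      rcases Nat.eq_zero_or_pos c with hc0 | hc0
      · subst hc0; exact hnd d h4 h5 hqD
      · have h01 : (0, j-1) ∈ D := hjmin _ (by omega) (by omega)
        exact hcross _ h01 _ hqD (Or.inl ⟨by omega, by omega, by omega⟩)
  -- the apex inside (j-1, k)
  obtain ⟨x, hx1, hx2, hax, hxk⟩ :=
    inner_apex N D hD (Or.inr (Or.inr heD)) (by omega) (by omega)
  have hax' : x = j ∨ (j-1, x) ∈ D := by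
    rcases hax with h | ⟨h, -⟩ | h
    · left; omega
    · omega
    · right; exact h
  have hxk' : k = x + 1 ∨ (x, k) ∈ D := by
    rcases hxk with h | ⟨h, -⟩ | h
    · left; exact h
    · omega
    · right; exact h
  have hx0 : (0, x) ∉ D := hnd x hx1 hx2
  refine ⟨insert ((0 : ℕ), x) (D.erase (j-1, k)), ?_⟩
  set D' := insert ((0 : ℕ), x) (D.erase (j-1, k)) with hD'def
  have hD'mem : ∀ p : ℕ × ℕ, p ∈ D' ↔ p = (0, x) ∨ (p ∈ D ∧ p ≠ (j-1, k)) := by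
    intro p
    rw [hD'def, Finset.mem_insert, Finset.mem_erase]
    constructor
    · rintro (h | ⟨h1, h2⟩)
      · exact Or.inl h
      · exact Or.inr ⟨h2, h1⟩
    · rintro (h | ⟨h1, h2⟩)
      · exact Or.inl h
      · exact Or.inr ⟨h2, h1⟩
  -- the new diagonal does not cross anything remaining
  have hkey : ∀ q ∈ D, q ≠ ((j-1 : ℕ), k) → ¬ DiagCross (0, x) q := by
    rintro ⟨c, d⟩ hqD hqe hq
    obtain ⟨hcd, hdN, -, -⟩ := hdiag _ hqD
    simp only at hcd hdN
    simp only [DiagCross] at hq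
    rcases hq with ⟨h3, h4, h5⟩ | ⟨h3, -, -⟩
    swap
    · omega
    -- 0 < c, c < x, x < d
    rcases Nat.lt_trichotomy d k with hdk | hdk | hdk
    · rcases Nat.lt_trichotomy c (j-1) with hc | hc | hc
      · exact hcross _ heD _ hqD (Or.inr ⟨hc, by omega, hdk⟩)
      · rcases hxk' with h | hxkD
        · omega
        · exact hcross _ hxkD _ hqD (Or.inr ⟨by omega, h5, hdk⟩)
      · rcases hax' with h | haxD
        · omega
        · exact hcross _ haxD _ hqD (Or.inl ⟨hc, h4, by omega⟩)
    · rcases Nat.lt_trichotomy c (j-1) with hc | hc | hc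
      · have h01 : (0, j-1) ∈ D := hjmin _ (by omega) (by omega)
        exact hcross _ h01 _ hqD (Or.inl ⟨h3, hc, by omega⟩)
      · exact hqe (by simp only [Prod.mk.injEq]; omega)
      · rcases hax' with h | haxD
        · omega
        · exact hcross _ haxD _ hqD (Or.inl ⟨hc, h4, by omega⟩)
    · rcases hkP with h | ⟨-, h⟩ | hkD
      · omega
      · omega
      · exact hcross _ hkD _ hqD (Or.inl ⟨h3, by omega, hdk⟩)
  have hdx : IsDiag N (0, x) := ⟨by omega, by omega, by omega, by omega⟩
  -- D' is a triangulation
  have hT' : IsPolygonTriangulation N D' := by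
    refine ⟨?_, ?_, ?_⟩
    · intro p hp
      rcases (hD'mem p).1 hp with rfl | ⟨hpD, -⟩
      · exact hdx
      · exact hdiag _ hpD
    · intro p hp q hq
      rcases (hD'mem p).1 hp with rfl | ⟨hpD, hpe⟩ <;>
        rcases (hD'mem q).1 hq with rfl | ⟨hqD, hqe⟩
      · rintro (⟨h, -, -⟩ | ⟨h, -, -⟩) <;> simp at h
      · exact hkey _ hqD hqe
      · exact fun h => hkey _ hpD hpe (diagCross_symm h)
      · exact hcross _ hpD _ hqD
    · intro p hpdiag hp
      by_cases hpD : p ∈ D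
      · have hpe : p = (j-1, k) := by
          by_contra hne'
          exact hp ((hD'mem p).2 (Or.inr ⟨hpD, hne'⟩))
        refine ⟨(0, x), (hD'mem _).2 (Or.inl rfl), ?_⟩
        subst hpe
        exact Or.inr ⟨by omega, hx1, hx2⟩
      · obtain ⟨⟨c, d⟩, hqD, hq⟩ := hmax p hpdiag hpD
        by_cases hqe : ((c, d) : ℕ × ℕ) = (j-1, k)
        · obtain ⟨c', d'⟩ := p
          obtain ⟨hcd', hdN', -, -⟩ := hpdiag
          simp only at hcd' hdN'
          rw [hqe] at hq
          simp only [DiagCross] at hq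
          rcases hq with ⟨h3, h4, h5⟩ | ⟨h3, h4, h5⟩
          · -- c' < j-1, j-1 < d', d' < k
            rcases Nat.eq_zero_or_pos c' with hc0 | hc0
            · subst hc0
              rcases Nat.lt_trichotomy d' x with hdx' | hdx' | hdx'
              · rcases hax' with h | haxD
                · omega
                · exact ⟨_, (hD'mem _).2 (Or.inr ⟨haxD, by simp only [ne_eq, Prod.mk.injEq]; omega⟩),
                    Or.inl ⟨by omega, h4, hdx'⟩⟩
              · exact absurd ((hD'mem _).2 (Or.inl (by simp [hdx']))) hp
              · rcases hxk' with h | hxkD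
                · omega
                · exact ⟨_, (hD'mem _).2 (Or.inr ⟨hxkD, by simp only [ne_eq, Prod.mk.injEq]; omega⟩),
                    Or.inl ⟨by omega, hdx', by omega⟩⟩
            · have h01 : (0, j-1) ∈ D := hjmin _ (by omega) (by omega)
              exact ⟨_, (hD'mem _).2 (Or.inr ⟨h01, by simp only [ne_eq, Prod.mk.injEq]; omega⟩),
                Or.inr ⟨hc0, h3, h4⟩⟩
          · -- j-1 < c', c' < k, k < d'
            have hkD : (0, k) ∈ D := by
              rcases hkP with h | ⟨-, h⟩ | h
              · omega
              · omega
              · exact h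
            exact ⟨_, (hD'mem _).2 (Or.inr ⟨hkD, by simp only [ne_eq, Prod.mk.injEq]; omega⟩),
              Or.inr ⟨by omega, by omega, h5⟩⟩
        · exact ⟨_, (hD'mem _).2 (Or.inr ⟨hqD, hqe⟩), hq⟩
  have hxne : ((0 : ℕ), x) ≠ ((j-1 : ℕ), k) := by simp only [ne_eq, Prod.mk.injEq]; omega
  have hsd1 : D \ D' = {((j-1 : ℕ), k)} := by
    ext p
    simp only [Finset.mem_sdiff, Finset.mem_singleton, hD'mem]
    constructor
    · rintro ⟨hpD, hp'⟩
      by_contra hne'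
      exact hp' (Or.inr ⟨hpD, hne'⟩)
    · rintro rfl
      refine ⟨heD, ?_⟩
      rintro (h | ⟨-, h⟩)
      · exact hxne h.symm
      · exact h rfl
  have hsd2 : D' \ D = {((0 : ℕ), x)} := by
    ext p
    simp only [Finset.mem_sdiff, Finset.mem_singleton, hD'mem]
    constructor
    · rintro ⟨h | ⟨hpD, -⟩, hp'⟩
      · exact h
      · exact absurd hpD hp'
    · rintro rfl
      exact ⟨Or.inl rfl, hx0⟩
  refine ⟨⟨hD, hT', by rw [hsd1]; exact Finset.card_singleton _,
    by rw [hsd2]; exact Finset.card_singleton _⟩, ?_⟩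
  have hmeas : D'.filter (fun p => p.1 ≠ 0) = (D.filter (fun p => p.1 ≠ 0)).erase (j-1, k) := by
    ext p
    simp only [Finset.mem_filter, Finset.mem_erase, hD'mem]
    constructor
    · rintro ⟨h | ⟨hpD, hpe⟩, hp1⟩
      · subst h; simp at hp1
      · exact ⟨hpe, hpD, hp1⟩
    · rintro ⟨hpe, hpD, hp1⟩
      exact ⟨Or.inr ⟨hpD, hpe⟩, hp1⟩
  rw [hmeas]
  have hmem : ((j-1 : ℕ), k) ∈ D.filter (fun p => p.1 ≠ 0) :=
    Finset.mem_filter.2 ⟨heD, by simp only [ne_eq]; omega⟩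
  have h1 := Finset.card_erase_of_mem hmem
  have hpos : 0 < (D.filter (fun p => p.1 ≠ 0)).card := Finset.card_pos.2 ⟨_, hmem⟩
  omega

lemma eq_fan (N : ℕ) (hN : 4 ≤ N) (D : Finset (ℕ × ℕ)) (hD : IsPolygonTriangulation N D)
    (h0 : ∀ p ∈ D, p.1 = 0) : D = FanTriangulation N := by
  obtain ⟨hdiag, hcross, hmax⟩ := hD
  ext ⟨a, b⟩
  simp only [FanTriangulation, Finset.mem_image, Finset.mem_Ico, Prod.mk.injEq]
  constructor
  · intro hmem
    obtain ⟨h1, h2, h3, h4⟩ := hdiag _ hmem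
    have ha := h0 _ hmem
    simp only at ha h1 h2 h3 h4
    exact ⟨b, ⟨by omega, by omega⟩, by omega, rfl⟩
  · rintro ⟨c, ⟨h2c, hcN⟩, h0a, rfl⟩
    subst h0a
    by_contra hmem
    have hd : IsDiag N (0, c) := ⟨by omega, by omega, by omega, by omega⟩
    obtain ⟨q, hqD, hq⟩ := hmax _ hd hmem
    have := h0 _ hqD
    simp only [DiagCross] at hq
    omega

lemma fan_card (N : ℕ) : (FanTriangulation N).card = N - 3 := by
  rw [FanTriangulation, Finset.card_image_of_injective _ (fun a b h => by
    simpa using h), Nat.card_Ico]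
  omega

lemma flipAdj_card {N : ℕ} {A B : Finset (ℕ × ℕ)} (h : FlipAdj N A B) : A.card = B.card := by
  obtain ⟨-, -, h1, h2⟩ := h
  have ha := Finset.card_sdiff_add_card_inter A B
  have hb := Finset.card_sdiff_add_card_inter B A
  rw [Finset.inter_comm] at hb
  omega

lemma reflTransGen_card {N : ℕ} {A B : Finset (ℕ × ℕ)}
    (h : Relation.ReflTransGen (FlipAdj N) A B) : A.card = B.card := by
  induction h with
  | refl => rfl
  | tail _ hadj ih => exact ih.trans (flipAdj_card hadj)

/-- Every triangulation of a convex polygon with `N ≥ 4` vertices can be transformed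
by finitely many flips into the fan triangulation at the vertex `0`, and every
triangulation has exactly `N - 3` diagonals. -/
theorem flips_to_fan_and_card (N : ℕ) (hN : 4 ≤ N) (D : Finset (ℕ × ℕ))
    (hD : IsPolygonTriangulation N D) :
    Relation.ReflTransGen (FlipAdj N) D (FanTriangulation N) ∧ D.card = N - 3 := by
  classical
  have key : ∀ n (E : Finset (ℕ × ℕ)), IsPolygonTriangulation N E →
      (E.filter fun p => p.1 ≠ 0).card ≤ n →
      Relation.ReflTransGen (FlipAdj N) E (FanTriangulation N) := by
    intro n
    induction n with
    | zero =>
      intro E hE h0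
      have hall : ∀ p ∈ E, p.1 = 0 := by
        intro p hp
        by_contra hne
        have hm : p ∈ E.filter fun p => p.1 ≠ 0 := Finset.mem_filter.2 ⟨hp, hne⟩
        have := Finset.card_pos.2 ⟨p, hm⟩
        omega
      rw [eq_fan N hN E hE hall]
    | succ n ih =>
      intro E hE hle
      by_cases hex : ∃ p ∈ E, p.1 ≠ 0
      · obtain ⟨D', hadj, hlt⟩ := flip_step N hN E hE hex
        exact Relation.ReflTransGen.head hadj (ih D' hadj.2.1 (by omega))
      · push_neg at hex
        rw [eq_fan N hN E hE hex]
  have h1 := key _ D hD le_rfl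
  refine ⟨h1, ?_⟩
  rw [reflTransGen_card h1, fan_card]
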